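/- Let Ω be a finite set with |Ω| ≥ 3. A distorted belief φ : Δ(Ω) → Δ(Ω) is positive, coherent, and continuous if and only if there exist a function ψ : Ω → ℝ with ψ(ω) > 0 for all ω and a real number α > 0 such that for every p ∈ Δ(Ω) and every ω ∈ Ω, φ(p)(ω) = ψ(ω)·p(ω)^α / Σ_{ω'∈Ω} ψ(ω')·p(ω')^α (with the convention 0^α = 0). -/

import Mathlib

open Finset

/-- `p` is a probability distribution on the finite set `Ω`. -/
def IsDist {Ω : Type*} [Fintype Ω] (p : Ω → ℝ) : Prop :=
  (∀ ω, 0 ≤ p ω) ∧ ∑ ω, p ω = 1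

/-- The conditional distribution `p(·|E)` of `p` given the event `E`. -/
noncomputable def condOn {Ω : Type*} [Fintype Ω] [DecidableEq Ω]
    (p : Ω → ℝ) (E : Finset Ω) : Ω → ℝ :=
  fun ω => if ω ∈ E then p ω / ∑ ω' ∈ E, p ω' else 0

/-- A distorted belief is positive if `φ(p)(E) = 0` iff `p(E) = 0`. -/
def PositiveBelief {Ω : Type*} [Fintype Ω] (φ : (Ω → ℝ) → Ω → ℝ) : Prop :=
  ∀ p, IsDist p → ∀ E : Finset Ω, (∑ ω ∈ E, φ p ω = 0 ↔ ∑ ω ∈ E, p ω = 0)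

/-- A distorted belief is coherent if distortion commutes with conditioning:
for all `p` and events `E` with `p(E) > 0`, `φ(p(·|E)) = φ(p)(·|E)`. -/
def CoherentBelief {Ω : Type*} [Fintype Ω] [DecidableEq Ω] (φ : (Ω → ℝ) → Ω → ℝ) : Prop :=
  ∀ p, IsDist p → ∀ E : Finset Ω, 0 < ∑ ω ∈ E, p ω →
    φ (condOn p E) = condOn (φ p) E

section Aux

variable {Ω : Type*} [Fintype Ω] [DecidableEq Ω]

/-- The two-point distribution putting mass `t` on `x` and `1 - t` on `y`. -/
noncomputable def twoPt (x y : Ω) (t : ℝ) : Ω → ℝ :=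
  fun ω => if ω = x then t else if ω = y then 1 - t else 0

lemma isDist_twoPt {x y : Ω} (hxy : x ≠ y) {t : ℝ} (h0 : 0 ≤ t) (h1 : t ≤ 1) :
    IsDist (twoPt x y t) := by
  constructor
  · intro ω
    unfold twoPt
    split_ifs <;> linarith
  · have : ∀ ω, twoPt x y t ω =
        (if ω = x then t else 0) + (if ω = y then 1 - t else 0) := by
      intro ω
      unfold twoPt
      by_cases h1' : ω = x
      · rw [if_pos h1', if_pos h1', if_neg (fun h => hxy (h1'.symm.trans h)), add_zero]
      · rw [if_neg h1', if_neg h1', zero_add]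
    rw [Finset.sum_congr rfl (fun ω _ => this ω), Finset.sum_add_distrib]
    simp

/-- The three-point distribution with masses `a, b, c` on `x, y, z`. -/
noncomputable def threePt (x y z : Ω) (a b c : ℝ) : Ω → ℝ :=
  fun ω => if ω = x then a else if ω = y then b else if ω = z then c else 0

lemma isDist_threePt {x y z : Ω} (hxy : x ≠ y) (hxz : x ≠ z) (hyz : y ≠ z)
    {a b c : ℝ} (ha : 0 ≤ a) (hb : 0 ≤ b) (hc : 0 ≤ c) (habc : a + b + c = 1) :
    IsDist (threePt x y z a b c) := by
  constructor
  · intro ω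
    unfold threePt
    split_ifs <;> linarith
  · have : ∀ ω, threePt x y z a b c ω =
        (if ω = x then a else 0) + (if ω = y then b else 0) + (if ω = z then c else 0) := by
      intro ω
      unfold threePt
      split_ifs with h1 h2 h3 <;> simp_all
    rw [Finset.sum_congr rfl (fun ω _ => this ω), Finset.sum_add_distrib,
      Finset.sum_add_distrib]
    simp [habc]

end Aux

section Forward

variable {Ω : Type*} [Fintype Ω] [DecidableEq Ω]
variable {φ : (Ω → ℝ) → Ω → ℝ}

/-- Pointwise positivity. -/
lemma point_pos (hmap : ∀ p, IsDist p → IsDist (φ p)) (hpos : PositiveBelief φ)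
    {p : Ω → ℝ} (hp : IsDist p) {ω : Ω} (hω : 0 < p ω) : 0 < φ p ω := by
  rcases lt_or_eq_of_le ((hmap p hp).1 ω) with h | h
  · exact h
  · exfalso
    have := (hpos p hp {ω}).mp (by simp [← h])
    simp at this
    exact hω.ne' this

lemma point_zero (hpos : PositiveBelief φ) {p : Ω → ℝ} (hp : IsDist p) {ω : Ω}
    (hω : p ω = 0) : φ p ω = 0 := by
  have := (hpos p hp {ω}).mpr (by simp [hω])
  simpa using this

/-- The odds-distortion function. -/
noncomputable def oddsG (φ : (Ω → ℝ) → Ω → ℝ) (x y : Ω) (s : ℝ) : ℝ :=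
  φ (twoPt x y (s / (1 + s))) x / φ (twoPt x y (s / (1 + s))) y

/-- Key consequence of coherence: the distorted odds only depend on the odds. -/
lemma keyA (hmap : ∀ p, IsDist p → IsDist (φ p)) (hpos : PositiveBelief φ)
    (hcoh : CoherentBelief φ) {x y : Ω} (hxy : x ≠ y)
    {p : Ω → ℝ} (hp : IsDist p) (hx : 0 < p x) (hy : 0 < p y) :
    φ p x / φ p y = oddsG φ x y (p x / p y) := by
  have hE : (0:ℝ) < ∑ ω ∈ ({x, y} : Finset Ω), p ω := by
    rw [Finset.sum_pair hxy]; linarith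
  have hxyne : (0:ℝ) < p x + p y := by linarith
  have hcond : condOn p {x, y} = twoPt x y (p x / (p x + p y)) := by
    funext ω
    simp only [condOn, twoPt, Finset.sum_pair hxy]
    by_cases h1 : ω = x
    · subst h1
      rw [if_pos (Finset.mem_insert_self _ _), if_pos rfl]
    · by_cases h2 : ω = y
      · subst h2
        rw [if_pos (by simp), if_neg h1, if_pos rfl]
        rw [eq_sub_iff_add_eq]
        field_simp
        ring
      · rw [if_neg (by simp [h1, h2]), if_neg h1, if_neg h2]
  have h := hcoh p hp {x, y} hE
  rw [hcond] at h
  have h0 : ∑ ω ∈ ({x, y} : Finset Ω), φ p ω ≠ 0 :=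
    fun hz => hE.ne' ((hpos p hp {x, y}).mp hz)
  have hst : p x / p y / (1 + p x / p y) = p x / (p x + p y) := by
    have h1 : 1 + p x / p y = (p y + p x) / p y := by field_simp
    rw [h1, div_div_div_cancel_right₀ hy.ne', add_comm]
  unfold oddsG
  rw [hst, h]
  simp only [condOn]
  rw [if_pos (Finset.mem_insert_self _ _), if_pos (by simp)]
  rw [div_div_div_cancel_right₀ h0]

lemma twoPt_mem {x y : Ω} (hxy : x ≠ y) {s : ℝ} (hs : 0 < s) :
    IsDist (twoPt x y (s / (1 + s))) ∧ 0 < s / (1 + s) ∧ 0 < 1 - s / (1 + s) := by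
  have h1 : 0 < 1 + s := by linarith
  have h2 : 0 < s / (1 + s) := div_pos hs h1
  have h3 : s / (1 + s) < 1 := (div_lt_one h1).mpr (by linarith)
  exact ⟨isDist_twoPt hxy h2.le h3.le, h2, by linarith⟩

lemma oddsG_pos (hmap : ∀ p, IsDist p → IsDist (φ p)) (hpos : PositiveBelief φ)
    {x y : Ω} (hxy : x ≠ y) {s : ℝ} (hs : 0 < s) : 0 < oddsG φ x y s := by
  obtain ⟨hd, h2, h3⟩ := twoPt_mem hxy hs
  have hx : 0 < φ (twoPt x y (s / (1 + s))) x :=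
    point_pos hmap hpos hd (by simpa [twoPt] using h2)
  have hy : 0 < φ (twoPt x y (s / (1 + s))) y :=
    point_pos hmap hpos hd (by simp only [twoPt, if_neg hxy.symm, if_pos rfl]; exact h3)
  exact div_pos hx hy

lemma oddsG_cocycle (hmap : ∀ p, IsDist p → IsDist (φ p)) (hpos : PositiveBelief φ)
    (hcoh : CoherentBelief φ) {x y z : Ω} (hxy : x ≠ y) (hxz : x ≠ z) (hyz : y ≠ z)
    {s t : ℝ} (hs : 0 < s) (ht : 0 < t) :
    oddsG φ x z (s * t) = oddsG φ x y s * oddsG φ y z t := by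
  set D : ℝ := s * t + t + 1 with hD
  have hDpos : 0 < D := by positivity
  set p : Ω → ℝ := threePt x y z (s * t / D) (t / D) (1 / D) with hpdef
  have hp : IsDist p := isDist_threePt hxy hxz hyz (by positivity) (by positivity)
    (by positivity) (by field_simp; rw [hD]; ring)
  have hpx : p x = s * t / D := by simp [hpdef, threePt]
  have hpy : p y = t / D := by simp [hpdef, threePt, hxy.symm]
  have hpz : p z = 1 / D := by simp [hpdef, threePt, hxz.symm, hyz.symm]
  have hx : 0 < p x := by rw [hpx]; positivity
  have hy : 0 < p y := by rw [hpy]; positivity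
  have hz : 0 < p z := by rw [hpz]; positivity
  have r1 : p x / p y = s := by rw [hpx, hpy]; field_simp; try ring
  have r2 : p y / p z = t := by rw [hpy, hpz]; field_simp; try ring
  have r3 : p x / p z = s * t := by rw [hpx, hpz]; field_simp; try ring
  have k1 := keyA hmap hpos hcoh hxy hp hx hy
  have k2 := keyA hmap hpos hcoh hyz hp hy hz
  have k3 := keyA hmap hpos hcoh hxz hp hx hz
  rw [r1] at k1
  rw [r2] at k2
  rw [r3] at k3
  have hφy : φ p y ≠ 0 := (point_pos hmap hpos hp hy).ne'
  rw [← k1, ← k2, ← k3, div_mul_div_cancel₀]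
  exact hφy

lemma twoPt_contOn {x y : Ω} (hxy : x ≠ y) :
    ContinuousOn (fun s : ℝ => twoPt x y (s / (1 + s))) (Set.Ioi 0) := by
  have hc : ContinuousOn (fun s : ℝ => s / (1 + s)) (Set.Ioi 0) :=
    ContinuousOn.div continuousOn_id (by fun_prop)
      (fun s hs => by have : (0:ℝ) < s := hs; positivity)
  rw [continuousOn_pi]
  intro ω
  simp only [twoPt]
  split_ifs with h1 h2
  · exact hc
  · exact continuousOn_const.sub hc
  · exact continuousOn_const

lemma oddsG_contOn (hmap : ∀ p, IsDist p → IsDist (φ p)) (hpos : PositiveBelief φ)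
    (hcont : ContinuousOn φ {p | IsDist p}) {x y : Ω} (hxy : x ≠ y) :
    ContinuousOn (oddsG φ x y) (Set.Ioi 0) := by
  have hmem : ∀ s ∈ Set.Ioi (0:ℝ), twoPt x y (s / (1 + s)) ∈ {p | IsDist p} :=
    fun s hs => (twoPt_mem hxy hs).1
  have hφ : ContinuousOn (fun s : ℝ => φ (twoPt x y (s / (1 + s)))) (Set.Ioi 0) :=
    hcont.comp (twoPt_contOn hxy) hmem
  have hφx : ContinuousOn (fun s : ℝ => φ (twoPt x y (s / (1 + s))) x) (Set.Ioi 0) :=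
    (continuous_apply x).comp_continuousOn hφ
  have hφy : ContinuousOn (fun s : ℝ => φ (twoPt x y (s / (1 + s))) y) (Set.Ioi 0) :=
    (continuous_apply y).comp_continuousOn hφ
  exact hφx.div hφy (fun s hs => by
    obtain ⟨hd, h2, h3⟩ := twoPt_mem hxy hs
    exact (point_pos hmap hpos hd
      (by simp only [twoPt, if_neg hxy.symm, if_pos rfl]; exact h3)).ne')

lemma oddsG_tendsto_zero (hmap : ∀ p, IsDist p → IsDist (φ p)) (hpos : PositiveBelief φ)
    (hcont : ContinuousOn φ {p | IsDist p}) {x y : Ω} (hxy : x ≠ y) :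
    Filter.Tendsto (oddsG φ x y) (nhdsWithin 0 (Set.Ioi 0)) (nhds 0) := by
  set q0 : Ω → ℝ := twoPt x y 0 with hq0
  have hq : IsDist q0 := isDist_twoPt hxy le_rfl zero_le_one
  have hratio : ContinuousAt (fun s : ℝ => s / (1 + s)) 0 :=
    ContinuousAt.div continuousAt_id (by fun_prop) (by norm_num)
  have hFc : ContinuousAt (fun s : ℝ => twoPt x y (s / (1 + s))) 0 := by
    rw [continuousAt_pi]
    intro ω
    simp only [twoPt]
    split_ifs with h1 h2
    · exact hratio
    · exact continuousAt_const.sub hratio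
    · exact continuousAt_const
  have hF0 : (fun s : ℝ => twoPt x y (s / (1 + s))) 0 = q0 := by norm_num [hq0]
  have hF : Filter.Tendsto (fun s : ℝ => twoPt x y (s / (1 + s)))
      (nhdsWithin 0 (Set.Ioi 0)) (nhdsWithin q0 {p | IsDist p}) := by
    rw [tendsto_nhdsWithin_iff]
    constructor
    · exact tendsto_nhdsWithin_of_tendsto_nhds (hF0 ▸ hFc.tendsto)
    · exact Filter.eventually_of_mem self_mem_nhdsWithin fun s hs => (twoPt_mem hxy hs).1
  have hφF : Filter.Tendsto (fun s : ℝ => φ (twoPt x y (s / (1 + s))))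
      (nhdsWithin 0 (Set.Ioi 0)) (nhds (φ q0)) :=
    (hcont.continuousWithinAt (by exact hq)).tendsto.comp hF
  have hx0 : φ q0 x = 0 := point_zero hpos hq (by simp [hq0, twoPt])
  have hy0 : 0 < φ q0 y := point_pos hmap hpos hq
    (by simp only [hq0, twoPt, if_neg hxy.symm, if_pos rfl]; norm_num)
  have hnum := hφF.apply_nhds x
  have hden := hφF.apply_nhds y
  rw [hx0] at hnum
  have := hnum.div hden hy0.ne'
  rw [zero_div] at this; exact this

/-- The normalized odds-distortion. -/
noncomputable def oddsH (φ : (Ω → ℝ) → Ω → ℝ) (x y : Ω) (s : ℝ) : ℝ :=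
  oddsG φ x y s / oddsG φ x y 1

lemma oddsH_pos (hmap : ∀ p, IsDist p → IsDist (φ p)) (hpos : PositiveBelief φ)
    {x y : Ω} (hxy : x ≠ y) {s : ℝ} (hs : 0 < s) : 0 < oddsH φ x y s :=
  div_pos (oddsG_pos hmap hpos hxy hs) (oddsG_pos hmap hpos hxy one_pos)

/-- Change of the second coordinate. -/
lemma oddsH_M1 (hmap : ∀ p, IsDist p → IsDist (φ p)) (hpos : PositiveBelief φ)
    (hcoh : CoherentBelief φ) {x y z : Ω} (hxy : x ≠ y) (hxz : x ≠ z) (hyz : y ≠ z)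
    {s : ℝ} (hs : 0 < s) : oddsH φ x y s = oddsH φ x z s := by
  have e1 := oddsG_cocycle hmap hpos hcoh hxz hxy hyz.symm hs one_pos
  have e2 := oddsG_cocycle hmap hpos hcoh hxz hxy hyz.symm one_pos one_pos
  rw [mul_one] at e1 e2
  unfold oddsH
  rw [e1, e2]
  have h1 := (oddsG_pos hmap hpos hxz one_pos).ne'
  have h2 := (oddsG_pos hmap hpos hyz.symm one_pos).ne'
  field_simp

/-- Change of the first coordinate. -/
lemma oddsH_M2 (hmap : ∀ p, IsDist p → IsDist (φ p)) (hpos : PositiveBelief φ)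
    (hcoh : CoherentBelief φ) {x y z : Ω} (hxy : x ≠ y) (hxz : x ≠ z) (hyz : y ≠ z)
    {s : ℝ} (hs : 0 < s) : oddsH φ x z s = oddsH φ y z s := by
  have e1 := oddsG_cocycle hmap hpos hcoh hxy hxz hyz one_pos hs
  have e2 := oddsG_cocycle hmap hpos hcoh hxy hxz hyz one_pos one_pos
  rw [one_mul] at e1 e2
  unfold oddsH
  rw [e1, e2]
  have h1 := (oddsG_pos hmap hpos hxy one_pos).ne'
  have h2 := (oddsG_pos hmap hpos hyz one_pos).ne'
  field_simp

lemma exists_third (hΩ : 3 ≤ Fintype.card Ω) (x y : Ω) : ∃ z : Ω, z ≠ x ∧ z ≠ y := by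
  by_contra h
  push_neg at h
  have hsub : (Finset.univ : Finset Ω) ⊆ {x, y} := by
    intro z _
    rcases eq_or_ne z x with h1 | h1
    · simp [h1]
    · simp [h z h1]
  have := Finset.card_le_card hsub
  have h2 : ({x, y} : Finset Ω).card ≤ 2 :=
    (Finset.card_insert_le _ _).trans (by simp)
  rw [Finset.card_univ] at this
  omega

lemma oddsH_mul (hΩ : 3 ≤ Fintype.card Ω) (hmap : ∀ p, IsDist p → IsDist (φ p))
    (hpos : PositiveBelief φ) (hcoh : CoherentBelief φ) {x y : Ω} (hxy : x ≠ y)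
    {s t : ℝ} (hs : 0 < s) (ht : 0 < t) :
    oddsH φ x y (s * t) = oddsH φ x y s * oddsH φ x y t := by
  obtain ⟨z, hzx, hzy⟩ := exists_third hΩ x y
  have e4 := oddsG_cocycle hmap hpos hcoh hzx.symm hxy hzy hs ht
  have e1 := oddsG_cocycle hmap hpos hcoh hzx.symm hxy hzy hs one_pos
  have e2 := oddsG_cocycle hmap hpos hcoh hzx.symm hxy hzy one_pos ht
  have e3 := oddsG_cocycle hmap hpos hcoh hzx.symm hxy hzy one_pos one_pos
  rw [mul_one] at e1
  rw [one_mul] at e2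
  rw [mul_one] at e3
  unfold oddsH
  rw [e4, e1, e2, e3]
  have h1 := (oddsG_pos hmap hpos hzx.symm one_pos).ne'
  have h2 := (oddsG_pos hmap hpos hzy one_pos).ne'
  field_simp

/-- `oddsH` does not depend on the chosen pair. -/
lemma oddsH_univ (hΩ : 3 ≤ Fintype.card Ω) (hmap : ∀ p, IsDist p → IsDist (φ p))
    (hpos : PositiveBelief φ) (hcoh : CoherentBelief φ) {x y x' y' : Ω}
    (hxy : x ≠ y) (hxy' : x' ≠ y') {s : ℝ} (hs : 0 < s) :
    oddsH φ x y s = oddsH φ x' y' s := by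
  rcases eq_or_ne x x' with hx | hx
  · subst hx
    rcases eq_or_ne y y' with hy | hy
    · rw [hy]
    · exact oddsH_M1 hmap hpos hcoh hxy hxy' hy hs
  · rcases eq_or_ne y y' with hy | hy
    · subst hy
      exact oddsH_M2 hmap hpos hcoh hx hxy hxy' hs
    · rcases eq_or_ne x y' with hxy'' | hxy''
      · rcases eq_or_ne x' y with h1 | h1
        · rw [h1, ← hxy'']
          obtain ⟨z, hzx, hzy⟩ := exists_third hΩ x y
          calc oddsH φ x y s = oddsH φ x z s :=
                oddsH_M1 hmap hpos hcoh hxy hzx.symm hzy.symm hs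
            _ = oddsH φ y z s := oddsH_M2 hmap hpos hcoh hxy hzx.symm hzy.symm hs
            _ = oddsH φ y x s := (oddsH_M1 hmap hpos hcoh hxy.symm hzy.symm hzx.symm hs).symm
        · rw [← hxy'']
          calc oddsH φ x y s = oddsH φ x' y s := oddsH_M2 hmap hpos hcoh hx hxy h1 hs
            _ = oddsH φ x' x s :=
                oddsH_M1 hmap hpos hcoh h1 (hxy'' ▸ hxy') hxy.symm hs
      · calc oddsH φ x y s = oddsH φ x y' s := oddsH_M1 hmap hpos hcoh hxy hxy'' hy hs
          _ = oddsH φ x' y' s := oddsH_M2 hmap hpos hcoh hx hxy'' hxy' hs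

lemma exists_alpha (hΩ : 3 ≤ Fintype.card Ω) (hmap : ∀ p, IsDist p → IsDist (φ p))
    (hpos : PositiveBelief φ) (hcoh : CoherentBelief φ)
    (hcont : ContinuousOn φ {p | IsDist p}) :
    ∃ α : ℝ, 0 < α ∧ ∀ x y : Ω, x ≠ y → ∀ s : ℝ, 0 < s → oddsH φ x y s = s ^ α := by
  obtain ⟨a, b, hab⟩ := Fintype.exists_pair_of_one_lt_card (α := Ω) (by omega)
  set Hf : ℝ → ℝ := oddsH φ a b with hHf
  have hHpos : ∀ s : ℝ, 0 < s → 0 < Hf s := fun s hs => oddsH_pos hmap hpos hab hs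
  have hmul : ∀ s t : ℝ, 0 < s → 0 < t → Hf (s * t) = Hf s * Hf t :=
    fun s t hs ht => oddsH_mul hΩ hmap hpos hcoh hab hs ht
  have hHcont : ContinuousOn Hf (Set.Ioi 0) := by
    have := (oddsG_contOn hmap hpos hcont hab).div_const (oddsG φ a b 1)
    exact this
  have fadd : ∀ u v : ℝ, Real.log (Hf (Real.exp (u + v))) =
      Real.log (Hf (Real.exp u)) + Real.log (Hf (Real.exp v)) := by
    intro u v
    rw [Real.exp_add, hmul _ _ (Real.exp_pos u) (Real.exp_pos v),
      Real.log_mul (hHpos _ (Real.exp_pos u)).ne' (hHpos _ (Real.exp_pos v)).ne']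
  set f : ℝ →+ ℝ := AddMonoidHom.mk' (fun u => Real.log (Hf (Real.exp u))) fadd with hf
  have hfc : Continuous f := by
    have h1 : Continuous (fun u : ℝ => Hf (Real.exp u)) :=
      hHcont.comp_continuous Real.continuous_exp (fun u => Real.exp_pos u)
    rw [continuous_iff_continuousAt]
    intro u
    have : ⇑f = Real.log ∘ (fun u : ℝ => Hf (Real.exp u)) := rfl
    rw [this]
    exact ContinuousAt.comp (Real.continuousAt_log (hHpos _ (Real.exp_pos u)).ne')
      h1.continuousAt
  set α := Real.log (Hf (Real.exp 1)) with hαdef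
  have hf1 : f 1 = α := rfl
  have hlin : ∀ u : ℝ, f u = u * α := by
    intro u
    have h := map_smul (f.toRealLinearMap hfc) u (1 : ℝ)
    simp only [AddMonoidHom.coe_toRealLinearMap, smul_eq_mul, mul_one] at h
    rw [h, hf1]
  have hHs : ∀ s : ℝ, 0 < s → Hf s = s ^ α := by
    intro s hs
    have h1 : f (Real.log s) = Real.log s * α := hlin _
    have h2 : f (Real.log s) = Real.log (Hf s) := by
      show Real.log (Hf (Real.exp (Real.log s))) = _
      rw [Real.exp_log hs]
    rw [h2] at h1
    have h3 := congrArg Real.exp h1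
    rw [Real.exp_log (hHpos s hs)] at h3
    rw [h3, Real.rpow_def_of_pos hs]
  have hlim : Filter.Tendsto Hf (nhdsWithin 0 (Set.Ioi 0)) (nhds 0) := by
    have := (oddsG_tendsto_zero hmap hpos hcont hab).div_const (oddsG φ a b 1)
    rw [zero_div] at this
    exact this
  have hα0 : 0 < α := by
    by_contra hneg
    push_neg at hneg
    have h1 : ∀ᶠ s in nhdsWithin (0:ℝ) (Set.Ioi 0), Hf s < 1 :=
      hlim.eventually_lt_const one_pos
    have h2 : Set.Ioo (0:ℝ) 1 ∈ nhdsWithin (0:ℝ) (Set.Ioi 0) :=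
      Ioo_mem_nhdsGT_of_mem ⟨le_rfl, one_pos⟩
    obtain ⟨s, hs1, hs2⟩ :=
      (h1.and (Filter.eventually_of_mem h2 fun s hs => hs)).exists
    have h3 := Real.one_le_rpow_of_pos_of_le_one_of_nonpos hs2.1 hs2.2.le hneg
    rw [← hHs s hs2.1] at h3
    linarith
  refine ⟨α, hα0, fun x y hxy s hs => ?_⟩
  rw [oddsH_univ hΩ hmap hpos hcoh hxy hab hs]
  exact hHs s hs

lemma forward_main (hΩ : 3 ≤ Fintype.card Ω) (hmap : ∀ p, IsDist p → IsDist (φ p))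
    (hpos : PositiveBelief φ) (hcoh : CoherentBelief φ)
    (hcont : ContinuousOn φ {p | IsDist p}) :
    ∃ (ψ : Ω → ℝ) (α : ℝ), (∀ ω, 0 < ψ ω) ∧ 0 < α ∧
      ∀ p, IsDist p → ∀ ω, φ p ω = ψ ω * p ω ^ α / ∑ ω', ψ ω' * p ω' ^ α := by
  obtain ⟨α, hα, hH⟩ := exists_alpha hΩ hmap hpos hcoh hcont
  have hcard : 0 < Fintype.card Ω := by omega
  have : Nonempty Ω := Fintype.card_pos_iff.mp hcard
  set u : Ω → ℝ := fun _ => (Fintype.card Ω : ℝ)⁻¹ with hu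
  have hu0 : ∀ ω, 0 < u ω := fun ω => by
    rw [hu]
    positivity
  have hud : IsDist u := by
    refine ⟨fun ω => (hu0 ω).le, ?_⟩
    rw [hu, Finset.sum_const, Finset.card_univ, nsmul_eq_mul]
    exact mul_inv_cancel₀ (by positivity)
  set ψ : Ω → ℝ := φ u with hψ
  have hψpos : ∀ ω, 0 < ψ ω := fun ω => point_pos hmap hpos hud (hu0 ω)
  have hG1 : ∀ x y : Ω, x ≠ y → oddsG φ x y 1 = ψ x / ψ y := by
    intro x y hxy
    have hk := keyA hmap hpos hcoh hxy hud (hu0 x) (hu0 y)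
    have h1 : u x / u y = 1 := div_self (hu0 y).ne'
    rw [h1] at hk
    exact hk.symm
  have hGs : ∀ x y : Ω, x ≠ y → ∀ s : ℝ, 0 < s →
      oddsG φ x y s = ψ x / ψ y * s ^ α := by
    intro x y hxy s hs
    have h1 := hH x y hxy s hs
    unfold oddsH at h1
    have h2 := (oddsG_pos hmap hpos hxy one_pos).ne'
    have h1' : oddsG φ x y s = s ^ α * oddsG φ x y 1 := by
      rw [← h1, div_mul_cancel₀ _ h2]
    rw [h1', hG1 x y hxy]
    ring
  have hcross : ∀ p, IsDist p → ∀ x y : Ω, 0 < p x → 0 < p y →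
      φ p x * (ψ y * p y ^ α) = φ p y * (ψ x * p x ^ α) := by
    intro p hp x y hx hy
    rcases eq_or_ne x y with rfl | hxy
    · ring
    · have hk := keyA hmap hpos hcoh hxy hp hx hy
      rw [hGs x y hxy _ (div_pos hx hy), Real.div_rpow hx.le hy.le,
        div_mul_div_comm] at hk
      have hφy : φ p y ≠ 0 := (point_pos hmap hpos hp hy).ne'
      have hden : ψ y * p y ^ α ≠ 0 :=
        (mul_pos (hψpos y) (Real.rpow_pos_of_pos hy α)).ne'
      rw [div_eq_div_iff hφy hden] at hk
      linear_combination hk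
  have hfull : ∀ p, IsDist p → (∀ ω, 0 < p ω) → ∀ x,
      φ p x = ψ x * p x ^ α / ∑ ω', ψ ω' * p ω' ^ α := by
    intro p hp hfs x
    have hSpos : 0 < ∑ ω', ψ ω' * p ω' ^ α :=
      Finset.sum_pos
        (fun ω _ => mul_pos (hψpos ω) (Real.rpow_pos_of_pos (hfs ω) α))
        Finset.univ_nonempty
    have key : φ p x * ∑ ω', ψ ω' * p ω' ^ α = ψ x * p x ^ α := by
      rw [Finset.mul_sum]
      have hterm : ∀ ω' ∈ Finset.univ, φ p x * (ψ ω' * p ω' ^ α) =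
          ψ x * p x ^ α * φ p ω' := by
        intro ω' _
        rw [hcross p hp x ω' (hfs x) (hfs ω')]
        ring
      rw [Finset.sum_congr rfl hterm, ← Finset.mul_sum, (hmap p hp).2, mul_one]
    rw [eq_div_iff hSpos.ne']
    exact key
  refine ⟨ψ, α, hψpos, hα, ?_⟩
  intro p hp x
  have hrpc : ∀ v : ℝ, ContinuousAt (fun w : ℝ => w ^ α) v :=
    fun v => Real.continuousAt_rpow_const v α (Or.inr hα.le)
  set q : ℝ → Ω → ℝ := fun t ω => (1 - t) * p ω + t * u ω with hq
  have hqd : ∀ t ∈ Set.Ioc (0:ℝ) 1, IsDist (q t) := by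
    intro t ht
    constructor
    · intro ω
      have h1 : 0 ≤ (1 - t) * p ω := mul_nonneg (by linarith [ht.2]) (hp.1 ω)
      have h2 : 0 ≤ t * u ω := mul_nonneg ht.1.le (hu0 ω).le
      simp only [hq]
      linarith
    · simp only [hq]
      rw [Finset.sum_add_distrib, ← Finset.mul_sum, ← Finset.mul_sum, hp.2, hud.2]
      ring
  have hqpos : ∀ t ∈ Set.Ioc (0:ℝ) 1, ∀ ω, 0 < q t ω := by
    intro t ht ω
    have h1 : 0 ≤ (1 - t) * p ω := mul_nonneg (by linarith [ht.2]) (hp.1 ω)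
    have h2 : 0 < t * u ω := mul_pos ht.1 (hu0 ω)
    simp only [hq]
    linarith
  have hIoc : Set.Ioc (0:ℝ) 1 ∈ nhdsWithin (0:ℝ) (Set.Ioi 0) :=
    Ioc_mem_nhdsGT_of_mem ⟨le_rfl, one_pos⟩
  have hqx : ∀ ω, Filter.Tendsto (fun t => q t ω) (nhdsWithin 0 (Set.Ioi 0))
      (nhds (p ω)) := by
    intro ω
    have hc : Continuous (fun t : ℝ => (1 - t) * p ω + t * u ω) := by fun_prop
    have h0 := hc.continuousAt (x := 0)
    rw [ContinuousAt, show (1 - (0:ℝ)) * p ω + 0 * u ω = p ω by ring] at h0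
    exact tendsto_nhdsWithin_of_tendsto_nhds h0
  have hqt : Filter.Tendsto q (nhdsWithin 0 (Set.Ioi 0))
      (nhdsWithin p {r | IsDist r}) := by
    rw [tendsto_nhdsWithin_iff]
    constructor
    · rw [tendsto_pi_nhds]
      exact hqx
    · exact Filter.eventually_of_mem hIoc fun t ht => hqd t ht
  have h1 : Filter.Tendsto (fun t => φ (q t) x) (nhdsWithin 0 (Set.Ioi 0))
      (nhds (φ p x)) :=
    (((hcont.continuousWithinAt (by exact hp)).tendsto.comp hqt)).apply_nhds x
  have hnum : ∀ ω, Filter.Tendsto (fun t => ψ ω * q t ω ^ α)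
      (nhdsWithin 0 (Set.Ioi 0)) (nhds (ψ ω * p ω ^ α)) := by
    intro ω
    exact (((hrpc (p ω)).tendsto.comp (hqx ω)).const_mul (ψ ω))
  have hden : Filter.Tendsto (fun t => ∑ ω', ψ ω' * q t ω' ^ α)
      (nhdsWithin 0 (Set.Ioi 0)) (nhds (∑ ω', ψ ω' * p ω' ^ α)) :=
    tendsto_finset_sum _ (fun ω' _ => hnum ω')
  have hSpos : 0 < ∑ ω', ψ ω' * p ω' ^ α := by
    obtain ⟨ω0, hω0⟩ : ∃ ω, 0 < p ω := by
      by_contra hno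
      push_neg at hno
      have : ∀ ω, p ω = 0 := fun ω => le_antisymm (hno ω) (hp.1 ω)
      have hs := hp.2
      rw [Finset.sum_congr rfl (fun ω _ => this ω), Finset.sum_const, smul_zero] at hs
      norm_num at hs
    refine Finset.sum_pos' (fun ω _ => mul_nonneg (hψpos ω).le
      (Real.rpow_nonneg (hp.1 ω) α)) ⟨ω0, Finset.mem_univ ω0, ?_⟩
    exact mul_pos (hψpos ω0) (Real.rpow_pos_of_pos hω0 α)
  have h2 : Filter.Tendsto (fun t => ψ x * q t x ^ α / ∑ ω', ψ ω' * q t ω' ^ α)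
      (nhdsWithin 0 (Set.Ioi 0)) (nhds (ψ x * p x ^ α / ∑ ω', ψ ω' * p ω' ^ α)) :=
    (hnum x).div hden hSpos.ne'
  have heq : (fun t => φ (q t) x) =ᶠ[nhdsWithin (0:ℝ) (Set.Ioi 0)]
      (fun t => ψ x * q t x ^ α / ∑ ω', ψ ω' * q t ω' ^ α) :=
    Filter.eventually_of_mem hIoc fun t ht => hfull (q t) (hqd t ht) (hqpos t ht) x
  exact tendsto_nhds_unique (h1.congr' heq) h2

end Forward

section Backward

variable {Ω : Type*} [Fintype Ω] [DecidableEq Ω]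
variable {φ : (Ω → ℝ) → Ω → ℝ} {ψ : Ω → ℝ} {α : ℝ}

lemma exists_pos_coord {p : Ω → ℝ} (hp : IsDist p) : ∃ ω, 0 < p ω := by
  by_contra hno
  push_neg at hno
  have hz : ∀ ω, p ω = 0 := fun ω => le_antisymm (hno ω) (hp.1 ω)
  have hs := hp.2
  rw [Finset.sum_congr rfl (fun ω _ => hz ω), Finset.sum_const, smul_zero] at hs
  norm_num at hs

lemma S_pos (hψ : ∀ ω, 0 < ψ ω) (hα : 0 < α) {p : Ω → ℝ} (hp : IsDist p) :
    0 < ∑ ω', ψ ω' * p ω' ^ α := by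
  obtain ⟨ω0, hω0⟩ := exists_pos_coord hp
  refine Finset.sum_pos' (fun ω _ => mul_nonneg (hψ ω).le
    (Real.rpow_nonneg (hp.1 ω) α)) ⟨ω0, Finset.mem_univ ω0, ?_⟩
  exact mul_pos (hψ ω0) (Real.rpow_pos_of_pos hω0 α)

lemma SE_pos (hψ : ∀ ω, 0 < ψ ω) (hα : 0 < α) {p : Ω → ℝ} (hp : IsDist p)
    {E : Finset Ω} (hE : 0 < ∑ ω ∈ E, p ω) : 0 < ∑ ω ∈ E, ψ ω * p ω ^ α := by
  obtain ⟨ω0, hω0E, hω0⟩ : ∃ ω ∈ E, 0 < p ω := by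
    by_contra hno
    push_neg at hno
    have : ∑ ω ∈ E, p ω = 0 :=
      Finset.sum_eq_zero fun ω hω => le_antisymm (hno ω hω) (hp.1 ω)
    rw [this] at hE
    exact lt_irrefl _ hE
  refine Finset.sum_pos' (fun ω _ => mul_nonneg (hψ ω).le
    (Real.rpow_nonneg (hp.1 ω) α)) ⟨ω0, hω0E, ?_⟩
  exact mul_pos (hψ ω0) (Real.rpow_pos_of_pos hω0 α)

lemma backward_pos (hψ : ∀ ω, 0 < ψ ω) (hα : 0 < α)
    (hrep : ∀ p, IsDist p → ∀ ω, φ p ω = ψ ω * p ω ^ α / ∑ ω', ψ ω' * p ω' ^ α) :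
    PositiveBelief φ := by
  intro p hp E
  have hS := S_pos hψ hα hp
  have hsum : ∑ ω ∈ E, φ p ω = (∑ ω ∈ E, ψ ω * p ω ^ α) / ∑ ω', ψ ω' * p ω' ^ α := by
    rw [Finset.sum_div]
    exact Finset.sum_congr rfl fun ω _ => hrep p hp ω
  rw [hsum, div_eq_zero_iff]
  simp only [hS.ne', or_false]
  rw [Finset.sum_eq_zero_iff_of_nonneg (fun ω _ => mul_nonneg (hψ ω).le
    (Real.rpow_nonneg (hp.1 ω) α)),
    Finset.sum_eq_zero_iff_of_nonneg (fun ω _ => hp.1 ω)]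
  refine forall_congr' fun ω => imp_congr Iff.rfl ?_
  rw [mul_eq_zero]
  simp only [(hψ ω).ne', false_or]
  exact Real.rpow_eq_zero (hp.1 ω) hα.ne'

lemma isDist_condOn {p : Ω → ℝ} (hp : IsDist p) {E : Finset Ω}
    (hE : 0 < ∑ ω ∈ E, p ω) : IsDist (condOn p E) := by
  constructor
  · intro ω
    unfold condOn
    split_ifs
    · exact div_nonneg (hp.1 ω) hE.le
    · exact le_rfl
  · unfold condOn
    rw [Finset.sum_ite_mem, Finset.univ_inter, ← Finset.sum_div, div_self hE.ne']

lemma backward_coh (hψ : ∀ ω, 0 < ψ ω) (hα : 0 < α)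
    (hrep : ∀ p, IsDist p → ∀ ω, φ p ω = ψ ω * p ω ^ α / ∑ ω', ψ ω' * p ω' ^ α) :
    CoherentBelief φ := by
  intro p hp E hE
  have hcd : IsDist (condOn p E) := isDist_condOn hp hE
  have hS := S_pos hψ hα hp
  have hSE := SE_pos hψ hα hp hE
  have hEα : (0:ℝ) < (∑ ω ∈ E, p ω) ^ α := Real.rpow_pos_of_pos hE α
  -- sum over the conditional
  have hcondval : ∀ ω', ψ ω' * condOn p E ω' ^ α =
      if ω' ∈ E then ψ ω' * p ω' ^ α / (∑ ω ∈ E, p ω) ^ α else 0 := by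
    intro ω'
    unfold condOn
    split_ifs with h
    · rw [Real.div_rpow (hp.1 ω') hE.le, mul_div_assoc]
    · rw [Real.zero_rpow hα.ne', mul_zero]
  have hcondsum : ∑ ω', ψ ω' * condOn p E ω' ^ α =
      (∑ ω' ∈ E, ψ ω' * p ω' ^ α) / (∑ ω ∈ E, p ω) ^ α := by
    rw [Finset.sum_congr rfl (fun ω' _ => hcondval ω'), Finset.sum_ite_mem,
      Finset.univ_inter, Finset.sum_div]
  have hφsumE : ∑ ω' ∈ E, φ p ω' =
      (∑ ω' ∈ E, ψ ω' * p ω' ^ α) / ∑ ω', ψ ω' * p ω' ^ α := by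
    rw [Finset.sum_div]
    exact Finset.sum_congr rfl fun ω _ => hrep p hp ω
  funext ω
  rw [hrep (condOn p E) hcd ω, hcondsum]
  unfold condOn
  by_cases hω : ω ∈ E
  · rw [if_pos hω, if_pos hω, hrep p hp ω, hφsumE,
      Real.div_rpow (hp.1 ω) hE.le, mul_div_assoc,
      div_div_div_cancel_right₀ hEα.ne', div_div_div_cancel_right₀ hS.ne']
    ring
  · rw [if_neg hω, if_neg hω, Real.zero_rpow hα.ne', mul_zero, zero_div]

lemma backward_cont (hψ : ∀ ω, 0 < ψ ω) (hα : 0 < α)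
    (hrep : ∀ p, IsDist p → ∀ ω, φ p ω = ψ ω * p ω ^ α / ∑ ω', ψ ω' * p ω' ^ α) :
    ContinuousOn φ {p | IsDist p} := by
  have hrc : Continuous (fun w : ℝ => w ^ α) :=
    continuous_iff_continuousAt.mpr fun v =>
      Real.continuousAt_rpow_const v α (Or.inr hα.le)
  apply ContinuousOn.congr
    (f := fun (p : Ω → ℝ) (ω : Ω) => ψ ω * p ω ^ α / ∑ ω', ψ ω' * p ω' ^ α)
  · rw [continuousOn_pi]
    intro ω
    apply ContinuousOn.div
    · apply Continuous.continuousOn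
      have h1 : Continuous fun p : Ω → ℝ => p ω ^ α := hrc.comp (continuous_apply ω)
      exact continuous_const.mul h1
    · apply Continuous.continuousOn
      apply continuous_finset_sum
      intro ω' _
      have h1 : Continuous fun p : Ω → ℝ => p ω' ^ α := hrc.comp (continuous_apply ω')
      exact continuous_const.mul h1
    · intro p hp
      exact (S_pos hψ hα hp).ne'
  · intro p hp
    exact funext (hrep p hp)

end Backward

theorem stmt0 {Ω : Type*} [Fintype Ω] [DecidableEq Ω] (hΩ : 3 ≤ Fintype.card Ω)
    (φ : (Ω → ℝ) → Ω → ℝ) (hmap : ∀ p, IsDist p → IsDist (φ p)) :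
    (PositiveBelief φ ∧ CoherentBelief φ ∧ ContinuousOn φ {p | IsDist p}) ↔
      ∃ (ψ : Ω → ℝ) (α : ℝ), (∀ ω, 0 < ψ ω) ∧ 0 < α ∧
        ∀ p, IsDist p → ∀ ω,
          φ p ω = ψ ω * p ω ^ α / ∑ ω', ψ ω' * p ω' ^ α := by
  constructor
  · rintro ⟨hpos, hcoh, hcont⟩
    exact forward_main hΩ hmap hpos hcoh hcont
  · rintro ⟨ψ, α, hψ, hα, hrep⟩
    exact ⟨backward_pos hψ hα hrep, backward_coh hψ hα hrep,
      backward_cont hψ hα hrep⟩
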